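/- For every natural number x ≥ 1, the infinite series ∑_{k=0}^{∞} 1/(star^k(x) + 1) converges to 1/x, where star(x) = x(x+1). -/

import Mathlib

def star (x : ℕ) : ℕ := x * (x + 1)

lemma star_iter_ge (x : ℕ) (hx : 1 ≤ x) (k : ℕ) : 2 ^ k ≤ star^[k] x := by
  induction k with
  | zero => simpa using hx
  | succ n ih =>
    rw [Function.iterate_succ_apply'] ; unfold _root_.star ; rw [pow_succ]
    have h1 : 1 ≤ star^[n] x := le_trans (Nat.one_le_two_pow) ih
    calc 2 ^ n * 2 ≤ star^[n] x * 2 := Nat.mul_le_mul_right _ ih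
      _ ≤ star^[n] x * (star^[n] x + 1) := by
          apply Nat.mul_le_mul_left; omega

theorem reciprocal_series (x : ℕ) (hx : 1 ≤ x) :
    HasSum (fun k => 1 / ((star^[k] x : ℝ) + 1)) (1 / (x : ℝ)) := by
  have hpos : ∀ k, (0 : ℝ) < (star^[k] x : ℝ) := by
    intro k
    have := star_iter_ge x hx k
    have h1 : (1 : ℕ) ≤ _root_.star^[k] x := le_trans Nat.one_le_two_pow this
    exact_mod_cast Nat.lt_of_lt_of_le Nat.zero_lt_one h1
  have key : ∀ k, 1 / ((_root_.star^[k] x : ℝ) + 1)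
      = 1 / (_root_.star^[k] x : ℝ) - 1 / (_root_.star^[k+1] x : ℝ) := by
    intro k
    have hs : _root_.star^[k+1] x = _root_.star^[k] x * (_root_.star^[k] x + 1) := by
      rw [Function.iterate_succ_apply']; rfl
    rw [hs]
    have h := hpos k
    have h1 : (0 : ℝ) < (_root_.star^[k] x : ℝ) + 1 := by linarith
    push_cast
    field_simp
    ring
  have hnn : ∀ k, (0 : ℝ) ≤ 1 / ((_root_.star^[k] x : ℝ) + 1) := by
    intro k
    positivity
  rw [hasSum_iff_tendsto_nat_of_nonneg hnn]
  have hsum : ∀ n, ∑ k ∈ Finset.range n, 1 / ((_root_.star^[k] x : ℝ) + 1)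
      = 1 / (x : ℝ) - 1 / (_root_.star^[n] x : ℝ) := by
    intro n
    simp_rw [key]
    rw [Finset.sum_range_sub' (fun k => 1 / (_root_.star^[k] x : ℝ))]
    simp
  simp_rw [hsum]
  have htend : Filter.Tendsto (fun n => 1 / (_root_.star^[n] x : ℝ)) Filter.atTop (nhds 0) := by
    apply squeeze_zero (fun n => by positivity) (g := fun n => (1/2 : ℝ) ^ n)
    · intro n
      rw [one_div_pow]
      apply one_div_le_one_div_of_le (by positivity)
      exact_mod_cast star_iter_ge x hx n
    · exact tendsto_pow_atTop_nhds_zero_of_lt_one (by norm_num) (by norm_num)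
  have := (tendsto_const_nhds (x := (1 / (x : ℝ)))).sub htend
  simpa using this
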